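/- Let $G$ be a distribution function of a probability measure on $\mathbb{R}$, $\chi\ge 0$ measurable, $0<\gamma<1$, and $x\in\mathbb{R}$. Then $\gamma \int_{(-\infty,x]} \chi(y)\left(\int_{(-\infty,y]}\chi\,dG\right)^{\gamma-1} dG(y) \le \left(\int_{(-\infty,x]}\chi\,dG\right)^{\gamma}$. -/

import Mathlib

open MeasureTheory Set ENNReal

private lemma rpow_anti {a b : ℝ≥0∞} {z : ℝ} (hz : z ≤ 0) (h : a ≤ b) : b ^ z ≤ a ^ z := by
  rw [← neg_neg z, ENNReal.rpow_neg b, ENNReal.rpow_neg a]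
  exact ENNReal.inv_le_inv.2 (ENNReal.rpow_le_rpow h (neg_nonneg.2 hz))

private lemma meas_lowerset_le (μ : Measure ℝ) (s : ℝ≥0∞) :
    μ {y | μ (Iic y) ≤ s} ≤ s := by
  set A := {y : ℝ | μ (Iic y) ≤ s} with hA
  have hlow : ∀ ⦃a b : ℝ⦄, b ≤ a → a ∈ A → b ∈ A := fun a b hba ha =>
    le_trans (measure_mono (Iic_subset_Iic.2 hba)) ha
  rcases A.eq_empty_or_nonempty with hAe | hAne
  · simp [hAe]
  by_cases hbdd : BddAbove A
  · set a := sSup A with ha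
    have hsub : A ⊆ Iic a := fun y hy => le_csSup hbdd hy
    by_cases hmem : a ∈ A
    · exact le_trans (measure_mono hsub) hmem
    · have hsub' : A ⊆ Iio a := fun y hy => lt_of_le_of_ne (hsub hy) (fun h : y = a => hmem (h ▸ hy))
      have hU : Iio a = ⋃ n : ℕ, Iic (a - 1 / (n + 1)) := by
        ext y
        simp only [mem_Iio, mem_iUnion, mem_Iic]
        constructor
        · intro hy
          obtain ⟨n, hn⟩ := exists_nat_one_div_lt (sub_pos.2 hy)
          exact ⟨n, by linarith⟩
        · rintro ⟨n, hn⟩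
          have h0 : (0:ℝ) < 1 / ((n:ℝ) + 1) := by positivity
          linarith
      have hmono : Monotone fun n : ℕ => Iic (a - 1 / ((n:ℝ) + 1)) := by
        intro m n hmn
        apply Iic_subset_Iic.2
        have h1 : (1:ℝ) / ((n:ℝ)+1) ≤ 1 / ((m:ℝ)+1) := by
          apply one_div_le_one_div_of_le (by positivity)
          have : (m:ℝ) ≤ n := Nat.cast_le.2 hmn
          linarith
        linarith
      calc μ A ≤ μ (Iio a) := measure_mono hsub'
        _ = ⨆ n : ℕ, μ (Iic (a - 1 / ((n:ℝ) + 1))) := by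
            rw [hU, hmono.directed_le.measure_iUnion]
        _ ≤ s := by
            apply iSup_le; intro n
            have hlt : a - 1 / ((n:ℝ) + 1) < a := by
              have h0 : (0:ℝ) < 1 / ((n:ℝ)+1) := by positivity
              linarith
            obtain ⟨y, hyA, hy⟩ := exists_lt_of_lt_csSup hAne hlt
            exact hlow hy.le hyA
  · have hAuniv : ∀ z : ℝ, z ∈ A := by
      intro z
      obtain ⟨y, hyA, hzy⟩ := not_bddAbove_iff.1 hbdd z
      exact hlow hzy.le hyA
    have hU : (univ : Set ℝ) = ⋃ n : ℕ, Iic (n : ℝ) := by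
      ext y; simp only [mem_univ, true_iff, mem_iUnion, mem_Iic]
      exact exists_nat_ge y
    have hmono : Monotone fun n : ℕ => Iic ((n:ℕ) : ℝ) := fun m n h =>
      Iic_subset_Iic.2 (by exact_mod_cast h)
    have : μ A ≤ μ univ := measure_mono (subset_univ _)
    rw [hU, hmono.directed_le.measure_iUnion] at this
    exact this.trans (iSup_le fun n => hAuniv (n : ℝ))

private lemma reduced (μ : Measure ℝ) (γ : ℝ) (hγ0 : 0 < γ) (hγ1 : γ < 1)
    (hfin : μ univ ≠ ∞) :
    ENNReal.ofReal γ * ∫⁻ y, (μ (Iic y)) ^ (γ - 1) ∂μ ≤ (μ univ) ^ γ := by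
  by_cases hM0 : μ univ = 0
  · have : μ = 0 := Measure.measure_univ_eq_zero.mp hM0
    subst this; simp
  set M := μ univ with hM
  have hMr : 0 < M.toReal := ENNReal.toReal_pos hM0 hfin
  set Mr := M.toReal with hMrdef
  have hγ1' : γ - 1 < 0 := by linarith
  have hγ1'' : γ - 1 ≠ 0 := by linarith
  set β := 1 / (γ - 1) with hβ
  have hβlt : β < -1 := by
    rw [hβ, div_lt_iff_of_neg (by linarith : γ - 1 < 0)]
    nlinarith
  have hβ0 : β < 0 := by linarith
  have hFmono : Monotone fun y : ℝ => μ (Iic y) := fun a b hab =>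
    measure_mono (Iic_subset_Iic.2 hab)
  have hFmeas : Measurable fun y : ℝ => μ (Iic y) := hFmono.measurable
  set g : ℝ → ℝ≥0∞ := fun y => (μ (Iic y)) ^ (γ - 1) with hg
  have hgmeas : Measurable g := hFmeas.pow_const _
  have hnull : μ {y | μ (Iic y) = 0} = 0 := by
    have := meas_lowerset_le μ 0
    simpa [le_zero_iff] using this
  have hae : ∀ᵐ y ∂μ, g y ≠ ∞ := by
    rw [ae_iff]
    refine measure_mono_null ?_ hnull
    intro y hy
    simp only [mem_setOf_eq, not_not] at hy ⊢
    rcases ENNReal.rpow_eq_top_iff.1 hy with ⟨h1, _⟩ | ⟨_, h2⟩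
    · exact h1
    · linarith
  have hstep1 : ∫⁻ y, g y ∂μ = ∫⁻ y, ENNReal.ofReal ((g y).toReal) ∂μ := by
    apply lintegral_congr_ae
    filter_upwards [hae] with y hy
    rw [ENNReal.ofReal_toReal hy]
  have hfmeas : Measurable fun y => (g y).toReal := hgmeas.ennreal_toReal
  have hstep2 : ∫⁻ y, ENNReal.ofReal ((g y).toReal) ∂μ
      = ∫⁻ t in Ioi 0, μ {a : ℝ | t < (g a).toReal} :=
    lintegral_eq_lintegral_meas_lt μ (Filter.Eventually.of_forall fun y => ENNReal.toReal_nonneg)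
      hfmeas.aemeasurable
  have hbound : ∀ t ∈ Ioi (0:ℝ),
      μ {a : ℝ | t < (g a).toReal} ≤ min ((ENNReal.ofReal t) ^ β) M := by
    intro t ht
    refine le_min ?_ (measure_mono (subset_univ _))
    refine le_trans (measure_mono ?_) (meas_lowerset_le μ _)
    intro a hta
    simp only [mem_setOf_eq] at hta ⊢
    have hgfin : g a ≠ ⊤ := by
      intro h; rw [h] at hta; simp at hta; linarith [mem_Ioi.1 ht]
    have h1 : ENNReal.ofReal t < g a :=
      (ENNReal.ofReal_lt_iff_lt_toReal (le_of_lt (mem_Ioi.1 ht)) hgfin).2 hta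
    by_contra hcon
    push_neg at hcon
    have h2 : g a ≤ ((ENNReal.ofReal t) ^ β) ^ (γ - 1) := rpow_anti hγ1'.le hcon.le
    rw [← ENNReal.rpow_mul, hβ, one_div, inv_mul_cancel₀ hγ1'', ENNReal.rpow_one] at h2
    exact absurd (h1.trans_le h2) (lt_irrefl _)
  set c := Mr ^ (γ - 1) with hc
  have hcpos : 0 < c := Real.rpow_pos_of_pos hMr _
  have hsplit : ∫⁻ t in Ioi 0, min ((ENNReal.ofReal t) ^ β) M
      ≤ (∫⁻ t in Ioc 0 c, M) + ∫⁻ t in Ioi c, (ENNReal.ofReal t) ^ β := by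
    calc ∫⁻ t in Ioi 0, min ((ENNReal.ofReal t) ^ β) M
        = ∫⁻ t in Ioc 0 c ∪ Ioi c, min ((ENNReal.ofReal t) ^ β) M := by
          rw [Ioc_union_Ioi_eq_Ioi hcpos.le]
      _ ≤ (∫⁻ t in Ioc 0 c, min ((ENNReal.ofReal t) ^ β) M)
            + ∫⁻ t in Ioi c, min ((ENNReal.ofReal t) ^ β) M := lintegral_union_le _ _ _
      _ ≤ (∫⁻ t in Ioc 0 c, M) + ∫⁻ t in Ioi c, (ENNReal.ofReal t) ^ β :=
          add_le_add
            (setLIntegral_mono' measurableSet_Ioc fun t _ => min_le_right _ _)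
            (setLIntegral_mono' measurableSet_Ioi fun t _ => min_le_left _ _)
  have hmul : Mr ^ γ = Mr * c := by
    have hγeq : γ = 1 + (γ - 1) := by ring
    rw [hγeq, Real.rpow_add hMr, Real.rpow_one, hc]
  have hI1 : ∫⁻ _ in Ioc (0:ℝ) c, (M : ℝ≥0∞) = ENNReal.ofReal (Mr ^ γ) := by
    rw [setLIntegral_const, Real.volume_Ioc, sub_zero]
    conv_lhs => rw [← ENNReal.ofReal_toReal hfin]
    rw [← ENNReal.ofReal_mul hMr.le, ← hmul]
  have hI2 : ∫⁻ t in Ioi c, (ENNReal.ofReal t) ^ β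
      = ENNReal.ofReal (Mr ^ γ * ((1 - γ) / γ)) := by
    have hint : IntegrableOn (fun t : ℝ => t ^ β) (Ioi c) :=
      integrableOn_Ioi_rpow_of_lt hβlt hcpos
    have hcong : ∫⁻ t in Ioi c, (ENNReal.ofReal t) ^ β
        = ∫⁻ t in Ioi c, ENNReal.ofReal (t ^ β) := by
      apply setLIntegral_congr_fun measurableSet_Ioi
      refine fun t ht => ?_
      beta_reduce
      rw [ENNReal.ofReal_rpow_of_pos (hcpos.trans ht)]
    have hnn : 0 ≤ᵐ[volume.restrict (Ioi c)] fun t : ℝ => t ^ β := by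
      filter_upwards [ae_restrict_mem measurableSet_Ioi] with t ht
      exact Real.rpow_nonneg (le_of_lt (hcpos.trans ht)) β
    rw [hcong, ← ofReal_integral_eq_lintegral_ofReal hint hnn,
      integral_Ioi_rpow_of_lt hβlt hcpos]
    congr 1
    have h1 : (γ - 1) * (β + 1) = γ := by rw [hβ]; field_simp; ring
    have hcpow : c ^ (β + 1) = Mr ^ γ := by
      rw [hc, ← Real.rpow_mul hMr.le, h1]
    have h2 : β + 1 = γ / (γ - 1) := by rw [hβ]; field_simp; ring
    rw [hcpow, h2]
    field_simp
    ring
  have hsum : ENNReal.ofReal (Mr ^ γ) + ENNReal.ofReal (Mr ^ γ * ((1 - γ) / γ))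
      = ENNReal.ofReal (Mr ^ γ / γ) := by
    rw [← ENNReal.ofReal_add (Real.rpow_nonneg hMr.le _)
      (mul_nonneg (Real.rpow_nonneg hMr.le _) (div_nonneg (by linarith) hγ0.le))]
    congr 1
    field_simp
    ring
  have hminmeas : Measurable fun t : ℝ => min ((ENNReal.ofReal t) ^ β) M :=
    (ENNReal.measurable_ofReal.pow_const β).min measurable_const
  calc ENNReal.ofReal γ * ∫⁻ y, g y ∂μ
      ≤ ENNReal.ofReal γ * ENNReal.ofReal (Mr ^ γ / γ) := by
        gcongr
        rw [hstep1, hstep2, ← hsum, ← hI1, ← hI2]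
        exact le_trans (setLIntegral_mono hminmeas hbound) hsplit
    _ = ENNReal.ofReal (Mr ^ γ) := by
        rw [← ENNReal.ofReal_mul hγ0.le]
        congr 1
        field_simp
    _ = M ^ γ := by
        rw [← ENNReal.ofReal_rpow_of_pos hMr, ENNReal.ofReal_toReal hfin]

/-- Power-integration lemma for the increasing function
`y ↦ ∫_{(-∞,y]} χ dG`, valid for arbitrary (possibly atomic) distributions. -/
theorem power_integration_lemma (ν : Measure ℝ) [IsProbabilityMeasure ν]
    (χ : ℝ → ℝ≥0∞) (hχ : Measurable χ) (γ : ℝ) (hγ0 : 0 < γ) (hγ1 : γ < 1)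
    (x : ℝ) :
    ENNReal.ofReal γ *
        ∫⁻ y in Iic x, χ y * (∫⁻ z in Iic y, χ z ∂ν) ^ (γ - 1) ∂ν
      ≤ (∫⁻ y in Iic x, χ y ∂ν) ^ γ := by
  by_cases htop : (∫⁻ y in Iic x, χ y ∂ν) = ∞
  · rw [htop, ENNReal.top_rpow_of_pos hγ0]
    exact le_top
  set μ : Measure ℝ := (ν.restrict (Iic x)).withDensity χ with hμ
  have hμIic : ∀ y : ℝ, μ (Iic y) = ∫⁻ z in Iic y ∩ Iic x, χ z ∂ν := by
    intro y
    rw [hμ, withDensity_apply _ measurableSet_Iic,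
      Measure.restrict_restrict measurableSet_Iic]
  have hμuniv : μ univ = ∫⁻ y in Iic x, χ y ∂ν := by
    rw [hμ, withDensity_apply _ MeasurableSet.univ, Measure.restrict_univ]
  have hGmeas : Measurable fun y : ℝ => (μ (Iic y)) ^ (γ - 1) :=
    (Monotone.measurable fun a b hab => measure_mono (Iic_subset_Iic.2 hab)).pow_const _
  have hkey : ∫⁻ y, (μ (Iic y)) ^ (γ - 1) ∂μ
      = ∫⁻ y in Iic x, χ y * (∫⁻ z in Iic y, χ z ∂ν) ^ (γ - 1) ∂ν := by
    rw [hμ, lintegral_withDensity_eq_lintegral_mul _ hχ hGmeas]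
    refine setLIntegral_congr_fun measurableSet_Iic (fun y hy => ?_)
    simp only [Pi.mul_apply]
    congr 2
    rw [hμIic y, inter_eq_left.2 (Iic_subset_Iic.2 hy)]
  calc ENNReal.ofReal γ * ∫⁻ y in Iic x, χ y * (∫⁻ z in Iic y, χ z ∂ν) ^ (γ - 1) ∂ν
      = ENNReal.ofReal γ * ∫⁻ y, (μ (Iic y)) ^ (γ - 1) ∂μ := by rw [hkey]
    _ ≤ (μ univ) ^ γ := reduced μ γ hγ0 hγ1 (by rw [hμuniv]; exact htop)
    _ = (∫⁻ y in Iic x, χ y ∂ν) ^ γ := by rw [hμuniv]
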